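/- (Complete-class property of nested predictive random sets.) Fix A ⊆ Θ and assume Θ_x(u) ≠ ∅ for all x, u, and (in the non-discrete case) that each a-event U_x(A) = {u : Θ_x(u) ⊆ A} is closed. Given any valid predictive random set S with belief function b(x) = bel_x(A; S), define S'_x = ⋂_{y : b(y) ≥ b(x)} U_y(A) and let S' be the nested random set supported on {S'_x} ∪ {∅, U} with P(S' ⊆ K) = sup{P_U(S'_x) : S'_x ⊆ K}. Then S' is valid and bel_x(A; S') ≥ bel_x(A; S) for every x. -/

import Mathlib

open MeasureTheory Set

/-- Theorem 3' (complete-class property of nested predictive random sets): fix an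
assertion `A` and assume `Θ_x(u) ≠ ∅` for all `x, u` and that each a-event
`U_x(A) = {u : Θ_x(u) ⊆ A}` is closed. Given any valid predictive random set `S` with
belief function `b(x) = bel_x(A;S)`, define `S'_x = ⋂_{y : b(y) ≥ b(x)} U_y(A)` and let
`S'` be the nested random set supported on `{S'_x} ∪ {∅, univ}` with
`P'(S' ⊆ K) = sup{μ(T) : T in the support, T ⊆ K}`. Then `S'` is valid and
`bel_x(A;S') ≥ bel_x(A;S)` for every `x`. -/
theorem complete_class_nested {U 𝒳 Θ Ω Ω' : Type*}
    [TopologicalSpace U] [MeasurableSpace U] [OpensMeasurableSpace U]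
    [MeasurableSpace Ω] [MeasurableSpace Ω']
    (μ : Measure U) [IsProbabilityMeasure μ]
    (P : Measure Ω) [IsProbabilityMeasure P]
    (P' : Measure Ω') [IsProbabilityMeasure P']
    (a : Θ → U → 𝒳) (A : Set Θ)
    (hne : ∀ (x : 𝒳) (u : U), {θ' : Θ | x = a θ' u}.Nonempty)
    (hclosed : ∀ x : 𝒳, IsClosed {u : U | {θ' : Θ | x = a θ' u} ⊆ A})
    (S : Ω → Set U)
    (hvalid : ∀ α ∈ Set.Ioo (0:ℝ) 1,
      μ {u | ENNReal.ofReal (1 - α) ≤ P {ω | u ∉ S ω}} ≤ ENNReal.ofReal α)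
    -- the belief function of `S` at `A`:
    (b : 𝒳 → ENNReal)
    (hb : ∀ x : 𝒳, b x = P {ω | (⋃ u ∈ S ω, {θ' : Θ | x = a θ' u}) ⊆ A})
    -- the new nested supports `S'_x = ⋂ {U_y(A) : b(y) ≥ b(x)}`:
    (S'set : 𝒳 → Set U)
    (hS'set : ∀ x : 𝒳,
      S'set x = ⋂ y ∈ {y : 𝒳 | b x ≤ b y}, {u : U | {θ' : Θ | y = a θ' u} ⊆ A})
    -- `S'` is a random set supported on `{S'_x : x} ∪ {∅, univ}` with the stated law:
    (S' : Ω' → Set U)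
    (hsupp : ∀ ω', S' ω' ∈ insert (∅ : Set U) (insert Set.univ (Set.range S'set)))
    (hdist : ∀ K : Set U,
      P' {ω' | S' ω' ⊆ K}
        = ⨆ T ∈ insert (∅ : Set U) (insert Set.univ (Set.range S'set)),
            ⨆ _ : T ⊆ K, μ T) :
    (∀ α ∈ Set.Ioo (0:ℝ) 1,
      μ {u | ENNReal.ofReal (1 - α) ≤ P' {ω' | u ∉ S' ω'}} ≤ ENNReal.ofReal α) ∧
    (∀ x : 𝒳,
      b x ≤ P' {ω' | (⋃ u ∈ S' ω', {θ' : Θ | x = a θ' u}) ⊆ A}) := by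

  -- notation: the a-events
  set Uev : 𝒳 → Set U := fun y => {u : U | {θ' : Θ | y = a θ' u} ⊆ A} with hUev
  have hbP : ∀ y, b y = P {ω | S ω ⊆ Uev y} := by
    intro y; rw [hb]
    congr 1
    ext ω
    show (⋃ u ∈ S ω, {θ' : Θ | y = a θ' u}) ⊆ A ↔ S ω ⊆ Uev y
    rw [iUnion₂_subset_iff]
    rfl
  have hb_le_one : ∀ y, b y ≤ 1 := fun y => by rw [hb]; exact prob_le_one
  -- key quantitative consequence of validity of S
  have keyC : ∀ (β : ENNReal) (G : Set U), β ≤ 1 →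
      (∀ u, u ∉ G → β ≤ P {ω | u ∉ S ω}) → β ≤ μ G := by
    intro β G hβ1 hG
    refine ENNReal.le_of_forall_pos_le_add fun ε hε hμG => ?_
    by_cases hεβ : β ≤ (ε : ENNReal)
    · exact hεβ.trans le_add_self
    push_neg at hεβ
    have hβtop : β ≠ ⊤ := (hβ1.trans_lt ENNReal.one_lt_top).ne
    set βr := β.toReal with hβrdef
    have hβback : ENNReal.ofReal βr = β := ENNReal.ofReal_toReal hβtop
    have hβr1 : βr ≤ 1 := by
      rw [hβrdef]
      exact ENNReal.toReal_le_of_le_ofReal zero_le_one (by simpa using hβ1)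
    have hεβr : (ε : ℝ) < βr := by
      have : (ε : ENNReal) < ENNReal.ofReal βr := by rw [hβback]; exact hεβ
      have h2 := (ENNReal.lt_ofReal_iff_toReal_lt (by simp)).mp this
      simpa using h2
    have hεr : (0:ℝ) < (ε:ℝ) := hε
    set α : ℝ := 1 - βr + ε with hαdef
    have hα : α ∈ Set.Ioo (0:ℝ) 1 := by
      constructor <;> [nlinarith; nlinarith]
    have hval := hvalid α hα
    have h1α : (1:ℝ) - α = βr - ε := by rw [hαdef]; ring
    have hsubc : Gᶜ ⊆ {u | ENNReal.ofReal (1 - α) ≤ P {ω | u ∉ S ω}} := by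
      intro u hu
      have h3 : ENNReal.ofReal (1 - α) ≤ β := by
        rw [h1α, ← hβback]
        exact ENNReal.ofReal_le_ofReal (by linarith)
      exact h3.trans (hG u hu)
    have hμGc : μ Gᶜ ≤ ENNReal.ofReal α := (measure_mono hsubc).trans hval
    have hαle : ENNReal.ofReal α ≤ (1 - β) + (ε : ENNReal) := by
      have : ENNReal.ofReal α = ENNReal.ofReal (1 - βr) + (ε : ENNReal) := by
        rw [hαdef, ENNReal.ofReal_add (by linarith) (le_of_lt hεr)]
        simp [ENNReal.ofReal_coe_nnreal]
      rw [this, ENNReal.ofReal_sub _ (ENNReal.toReal_nonneg), ENNReal.ofReal_one, hβback]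
    have hone : (1:ENNReal) ≤ μ G + μ Gᶜ := by
      rw [← measure_univ (μ := μ), ← Set.union_compl_self G]
      exact measure_union_le G Gᶜ
    have hfin : (1:ENNReal) ≤ μ G + ((1 - β) + (ε:ENNReal)) :=
      hone.trans (add_le_add_right (hμGc.trans hαle) _)
    -- cancel: β + 1 ≤ (μ G + ε) + 1
    have hcalc : β + 1 ≤ (μ G + (ε:ENNReal)) + 1 := by
      calc β + 1 ≤ β + (μ G + ((1 - β) + (ε:ENNReal))) := add_le_add_right hfin β
        _ = (μ G + (ε:ENNReal)) + (β + (1 - β)) := by ring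
        _ = (μ G + (ε:ENNReal)) + 1 := by rw [add_tsub_cancel_of_le hβ1]
    exact (ENNReal.add_le_add_iff_right ENNReal.one_ne_top).mp hcalc
  -- monotonicity of the nested supports
  have hmono : ∀ x y, b x ≤ b y → S'set x ⊆ S'set y := by
    intro x y hxy
    rw [hS'set, hS'set]
    intro u hu
    simp only [mem_iInter, mem_setOf_eq] at hu ⊢
    exact fun z hz => hu z (hxy.trans hz)
  have hnotmem : ∀ x u, u ∉ S'set x → b x ≤ P {ω | u ∉ S ω} := by
    intro x u hu
    rw [hS'set] at hu
    simp only [mem_iInter, mem_setOf_eq, not_forall] at hu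
    obtain ⟨y, hy, hyu⟩ := hu
    have hsub : {ω | S ω ⊆ Uev y} ⊆ {ω | u ∉ S ω} := by
      intro ω hω hmem
      exact hyu (hω hmem)
    calc b x ≤ b y := hy
      _ = P {ω | S ω ⊆ Uev y} := hbP y
      _ ≤ P {ω | u ∉ S ω} := measure_mono hsub
  have hμS' : ∀ x, b x ≤ μ (S'set x) :=
    fun x => keyC (b x) (S'set x) (hb_le_one x) (hnotmem x)
  have hScl : ∀ x, IsClosed (S'set x) := by
    intro x; rw [hS'set]
    exact isClosed_biInter fun y _ => hclosed y
  constructor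
  · -- validity of S'
    intro α hα
    set t := ENNReal.ofReal (1 - α) with htdef
    have ht1 : t ≤ 1 := by
      rw [htdef]; exact ENNReal.ofReal_le_one.mpr (by linarith [hα.1])
    set E := {u | t ≤ P' {ω' | u ∉ S' ω'}} with hE
    have hP' : ∀ u : U, P' {ω' | u ∉ S' ω'}
        = ⨆ T ∈ insert (∅ : Set U) (insert Set.univ (Set.range S'set)),
            ⨆ _ : T ⊆ {u}ᶜ, μ T := by
      intro u
      have heq : {ω' | u ∉ S' ω'} = {ω' | S' ω' ⊆ {u}ᶜ} := by
        ext ω'; simp [Set.subset_compl_singleton_iff]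
      rw [heq, hdist]
    have hmain : ∀ t' : ENNReal, t' < t → μ E ≤ 1 - t' := by
      intro t' ht'
      have ht'le : t' ≤ 1 := (ht'.le.trans ht1)
      set X' := {x : 𝒳 | t' < μ (S'set x)} with hX'
      set W := ⋂ x ∈ X', S'set x with hWdef
      have hWcl : IsClosed W := isClosed_biInter fun x _ => hScl x
      have hWmeas : MeasurableSet W := hWcl.measurableSet
      -- the core nestedness bound: t' ≤ μ W
      have hWμ : t' ≤ μ W := by
        rcases Set.eq_empty_or_nonempty X' with hXe | ⟨x₁, hx₁⟩
        · rw [hWdef, hXe]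
          simpa using ht'le
        · by_cases hmin : ∃ x₀ ∈ X', ∀ x ∈ X', b x₀ ≤ b x
          · obtain ⟨x₀, hx₀, hx₀min⟩ := hmin
            have hsub : S'set x₀ ⊆ W :=
              subset_iInter₂ fun x hx => hmono _ _ (hx₀min x hx)
            exact hx₀.le.trans (measure_mono hsub)
          · push_neg at hmin
            set β := ⨅ x : X', b (x : 𝒳) with hβdef
            have hβle : ∀ x (hx : x ∈ X'), β ≤ b x := fun x hx => iInf_le _ (⟨x, hx⟩ : X')
            have hβtop : β ≠ ⊤ :=
              ((hβle x₁ hx₁).trans_lt ((hb_le_one x₁).trans_lt ENNReal.one_lt_top)).ne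
            have hβlt : ∀ x ∈ X', β < b x := by
              intro x hx
              rcases (hβle x hx).lt_or_eq with h | h
              · exact h
              · exfalso
                obtain ⟨x', hx', hx'lt⟩ := hmin x hx
                exact hx'lt.not_ge (h ▸ hβle x' hx')
            have hseq : ∀ n : ℕ, ∃ x, x ∈ X' ∧ b x < β + (↑n)⁻¹ := by
              intro n
              have hpos : β < β + ((n:ENNReal))⁻¹ :=
                ENNReal.lt_add_right hβtop (by simp)
              rw [hβdef] at hpos
              obtain ⟨⟨x, hx⟩, h⟩ := iInf_lt_iff.mp hpos
              exact ⟨x, hx, h⟩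
            choose f hfX hfβ using hseq
            set T : ℕ → Set U := fun n => ⋂ k ∈ Finset.range (n+1), S'set (f k) with hTdef
            have hTmeas : ∀ n, MeasurableSet (T n) := fun n =>
              (isClosed_biInter fun k _ => hScl _).measurableSet
            have hTanti : Antitone T := by
              intro m n hmn
              refine subset_iInter₂ fun k hk => ?_
              exact biInter_subset_of_mem (Finset.mem_range.mpr
                (lt_of_lt_of_le (Finset.mem_range.mp hk) (by omega)))
            have hTμ : ∀ n, t' ≤ μ (T n) := by
              intro n
              obtain ⟨k, hk, hkmin⟩ := Finset.exists_min_image (Finset.range (n+1))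
                (fun k => b (f k)) ⟨0, by simp⟩
              have hsub : S'set (f k) ⊆ T n :=
                subset_iInter₂ fun j hj => hmono _ _ (hkmin j hj)
              exact (hfX k).le.trans (measure_mono hsub)
            have hiT : (⋂ n, T n) ⊆ W := by
              refine subset_iInter₂ fun x hx => ?_
              obtain ⟨n, hn⟩ : ∃ n : ℕ, β + ((n:ENNReal))⁻¹ ≤ b x := by
                have h0 : b x - β ≠ 0 := by
                  simpa [tsub_eq_zero_iff_le, not_le] using (hβlt x hx)
                obtain ⟨n, hn⟩ := ENNReal.exists_inv_nat_lt h0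
                refine ⟨n, ?_⟩
                calc β + ((n:ENNReal))⁻¹ ≤ β + (b x - β) := add_le_add_right hn.le β
                  _ = b x := add_tsub_cancel_of_le (hβle x hx)
              refine (iInter_subset T n).trans ?_
              refine subset_trans ?_ (hmono _ _ ((hfβ n).le.trans hn))
              exact biInter_subset_of_mem (Finset.mem_range.mpr (by omega))
            have hμiT : t' ≤ μ (⋂ n, T n) := by
              rw [hTanti.measure_iInter (fun n => (hTmeas n).nullMeasurableSet)
                ⟨0, measure_ne_top μ _⟩]
              exact le_iInf hTμ
            exact hμiT.trans (measure_mono hiT)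
      -- E ⊆ Wᶜ
      have hsubE : E ⊆ Wᶜ := by
        intro u hu
        have hlt : t' < P' {ω' | u ∉ S' ω'} := lt_of_lt_of_le ht' hu
        rw [hP'] at hlt
        obtain ⟨T0, hT0⟩ := lt_iSup_iff.mp hlt
        obtain ⟨hT0mem, hT0⟩ := lt_iSup_iff.mp hT0
        obtain ⟨hT0sub, hT0lt⟩ := lt_iSup_iff.mp hT0
        simp only [Set.mem_insert_iff, Set.mem_range] at hT0mem
        rcases hT0mem with rfl | rfl | ⟨x, rfl⟩
        · exact absurd hT0lt (by simp)
        · exact absurd (hT0sub (mem_univ u)) (by simp)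
        · have hxX : x ∈ X' := hT0lt
          intro huW
          exact (hT0sub (mem_iInter₂.mp huW x hxX)) rfl
      calc μ E ≤ μ Wᶜ := measure_mono hsubE
        _ = 1 - μ W := prob_compl_eq_one_sub hWmeas
        _ ≤ 1 - t' := tsub_le_tsub_left hWμ 1
    -- conclude μ E ≤ ofReal α
    have hEle : t ≤ 1 - μ E := by
      refine ENNReal.le_of_forall_pos_le_add fun ε hε _ => ?_
      by_cases htε : t ≤ (ε : ENNReal)
      · exact htε.trans le_add_self
      push_neg at htε
      have httop : t ≠ ⊤ := (ht1.trans_lt ENNReal.one_lt_top).ne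
      have hε0 : (ε:ENNReal) ≠ 0 := by simpa using hε.ne'
      have ht0 : t ≠ 0 := (lt_of_le_of_lt zero_le htε).ne'
      have ht'lt : t - (ε:ENNReal) < t := ENNReal.sub_lt_self httop ht0 hε0
      have hμE := hmain (t - (ε:ENNReal)) ht'lt
      -- from μ E ≤ 1 - (t - ε) deduce t - ε ≤ 1 - μ E hence t ≤ (1 - μ E) + ε
      have h1 : (t - (ε:ENNReal)) + μ E ≤ 1 := by
        calc (t - (ε:ENNReal)) + μ E ≤ (t - (ε:ENNReal)) + (1 - (t - (ε:ENNReal))) :=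
          add_le_add_right hμE _
          _ = 1 := add_tsub_cancel_of_le ((tsub_le_self).trans ht1)
      have h2 : t - (ε:ENNReal) ≤ 1 - μ E :=
        ENNReal.le_sub_of_add_le_right (measure_ne_top μ E) h1
      exact tsub_le_iff_right.mp h2
    have hfinal : μ E ≤ 1 - t := by
      have hμE1 : μ E ≤ 1 := prob_le_one
      have : μ E + t ≤ 1 := by
        calc μ E + t ≤ μ E + (1 - μ E) := add_le_add_right hEle _
          _ = 1 := add_tsub_cancel_of_le hμE1
      exact ENNReal.le_sub_of_add_le_right ((ht1.trans_lt ENNReal.one_lt_top).ne) this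
    have h1t : (1:ENNReal) - t = ENNReal.ofReal α := by
      rw [htdef, ← ENNReal.ofReal_one, ← ENNReal.ofReal_sub _ (by linarith [hα.2] : (0:ℝ) ≤ 1 - α)]
      norm_num
    rw [← h1t]
    exact hfinal
  · -- efficiency: b x ≤ bel_x(A; S')
    intro x
    have hset : {ω' | (⋃ u ∈ S' ω', {θ' : Θ | x = a θ' u}) ⊆ A} = {ω' | S' ω' ⊆ Uev x} := by
      ext ω'
      show (⋃ u ∈ S' ω', {θ' : Θ | x = a θ' u}) ⊆ A ↔ S' ω' ⊆ Uev x
      rw [iUnion₂_subset_iff]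
      rfl
    rw [hset, hdist]
    have hmem : S'set x ∈ insert (∅ : Set U) (insert Set.univ (Set.range S'set)) := by
      simp [Set.mem_range]
    have hsub : S'set x ⊆ Uev x := by
      rw [hS'set]
      exact biInter_subset_of_mem (le_refl (b x))
    exact le_iSup₂_of_le (S'set x) hmem (le_iSup_of_le hsub (hμS' x))
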